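/- Fix integers n, m, n_z ≥ 1 and constants ḡ > 0, δ̄ ≥ 0, η > 0, θ > 0 and 0 < v < c. Let γ^w, γ^z : [0,∞) → [0,∞) be continuous strictly increasing bijections, let f̄_z, f̄_x : [0,∞) → [0,∞) be nondecreasing, and let α_c : (−v,∞) → ℝ be strictly increasing. Let X ⊆ ℝ^n be open and V : X → [0,∞) differentiable. Let x ∈ X, z ∈ ℝ^{n_z}, u, w ∈ ℝ^m, F ∈ ℝ^n, let g be a real n×m matrix with λ_min(g·gᵀ) ≥ ḡ², and let δ be a real n×m matrix with ‖δ‖ ≤ δ̄. Assume: (i) V(x) ≥ max{ γ^w(‖w‖), γ^z(‖z‖), c }; (ii) ‖∇V(x)‖ ≥ η; (iii) the gain condition α_c(((c−v)/c)·V(x)) ≥ θ·V(x) + (1/ḡ)·f̄_z((γ^z)⁻¹(V(x))) + (1 + δ̄/ḡ)·(γ^w)⁻¹(V(x)) + (1/ḡ)·f̄_x(‖x‖); (iv) ‖F‖ ≤ f̄_z(‖z‖) + f̄_x(‖x‖); (v) ⟨gᵀ∇V(x)/‖gᵀ∇V(x)‖, u⟩ + (δ̄/ḡ)·‖u‖ ≤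 −α_c(V(x) − v). Then ⟨∇V(x), F + (g+δ)(u+w)⟩ ≤ −η·ḡ·θ·V(x). -/

import Mathlib

open scoped RealInnerProductSpace
set_option maxHeartbeats 1000000

/-- The pointwise decrease implication at the heart of Theorem 1, Property 2 of the
paper. The eigenvalue condition `λ_min(g gᵀ) ≥ ḡ²` is encoded by its equivalent form
`‖gᵀ p‖ ≥ ḡ ‖p‖`, matrices are continuous linear maps between Euclidean spaces
(operator norm = induced 2-norm), and the class-K bijections `γ^w, γ^z` of `[0,∞)`
are given together with right inverses on `[0,∞)`. -/
theorem stmt4 (n m n_z : ℕ) (hn : 1 ≤ n) (hm : 1 ≤ m) (hnz : 1 ≤ n_z)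
    (gbar δbar η θ v c : ℝ)
    (hg : 0 < gbar) (hδ0 : 0 ≤ δbar) (hη : 0 < η) (hθ : 0 < θ)
    (hv : 0 < v) (hvc : v < c)
    (γw γz γw_inv γz_inv : ℝ → ℝ)
    (hγw_cont : ContinuousOn γw (Set.Ici 0))
    (hγw_mono : StrictMonoOn γw (Set.Ici 0))
    (hγw_bij : Set.BijOn γw (Set.Ici 0) (Set.Ici 0))
    (hγz_cont : ContinuousOn γz (Set.Ici 0))
    (hγz_mono : StrictMonoOn γz (Set.Ici 0))
    (hγz_bij : Set.BijOn γz (Set.Ici 0) (Set.Ici 0))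
    (hγw_inv : ∀ s ∈ Set.Ici (0 : ℝ), γw_inv s ∈ Set.Ici (0 : ℝ) ∧ γw (γw_inv s) = s)
    (hγz_inv : ∀ s ∈ Set.Ici (0 : ℝ), γz_inv s ∈ Set.Ici (0 : ℝ) ∧ γz (γz_inv s) = s)
    (fz fx : ℝ → ℝ)
    (hfz_mono : MonotoneOn fz (Set.Ici 0)) (hfz0 : ∀ s ∈ Set.Ici (0 : ℝ), 0 ≤ fz s)
    (hfx_mono : MonotoneOn fx (Set.Ici 0)) (hfx0 : ∀ s ∈ Set.Ici (0 : ℝ), 0 ≤ fx s)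
    (αc : ℝ → ℝ) (hαc : StrictMonoOn αc (Set.Ioi (-v)))
    (X : Set (EuclideanSpace ℝ (Fin n))) (hX : IsOpen X)
    (V : EuclideanSpace ℝ (Fin n) → ℝ) (hVnonneg : ∀ y ∈ X, 0 ≤ V y)
    (x : EuclideanSpace ℝ (Fin n)) (hx : x ∈ X)
    (hVdiff : DifferentiableAt ℝ V x)
    (z : EuclideanSpace ℝ (Fin n_z)) (u w : EuclideanSpace ℝ (Fin m))
    (F : EuclideanSpace ℝ (Fin n))
    (g δ : EuclideanSpace ℝ (Fin m) →L[ℝ] EuclideanSpace ℝ (Fin n))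
    (hgmin : ∀ p : EuclideanSpace ℝ (Fin n),
      gbar * ‖p‖ ≤ ‖ContinuousLinearMap.adjoint g p‖)
    (hδnorm : ‖δ‖ ≤ δbar)
    (h1 : max (max (γw ‖w‖) (γz ‖z‖)) c ≤ V x)
    (h2 : η ≤ ‖gradient V x‖)
    (h3 : θ * V x + 1 / gbar * fz (γz_inv (V x)) + (1 + δbar / gbar) * γw_inv (V x)
        + 1 / gbar * fx ‖x‖ ≤ αc ((c - v) / c * V x))
    (h4 : ‖F‖ ≤ fz ‖z‖ + fx ‖x‖)
    (h5 : ⟪(‖ContinuousLinearMap.adjoint g (gradient V x)‖)⁻¹ •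
            ContinuousLinearMap.adjoint g (gradient V x), u⟫
        + δbar / gbar * ‖u‖ ≤ -αc (V x - v)) :
    ⟪gradient V x, F + (g + δ) (u + w)⟫ ≤ -(η * gbar * θ * V x) := by
  set p := gradient V x with hp
  set q := ContinuousLinearMap.adjoint g p with hq
  have hVc : c ≤ V x := le_trans (le_max_right _ _) h1
  have hVpos : 0 < V x := lt_of_lt_of_le (hv.trans hvc) hVc
  have hVnn : (0:ℝ) ≤ V x := hVpos.le
  have hpη : η ≤ ‖p‖ := h2
  have hppos : 0 < ‖p‖ := hη.trans_le hpη
  have hqge : gbar * ‖p‖ ≤ ‖q‖ := hgmin p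
  have hqpos : 0 < ‖q‖ := lt_of_lt_of_le (mul_pos hg hppos) hqge
  -- right inverses
  obtain ⟨hwinv_nn, hwinv_eq⟩ := hγw_inv (V x) hVnn
  obtain ⟨hzinv_nn, hzinv_eq⟩ := hγz_inv (V x) hVnn
  -- ‖w‖ ≤ γw_inv (V x)
  have hwle : ‖w‖ ≤ γw_inv (V x) := by
    have h := le_trans (le_trans (le_max_left _ _) (le_max_left _ _)) h1
    rw [← hwinv_eq] at h
    exact (hγw_mono.le_iff_le (norm_nonneg w) hwinv_nn).mp h
  have hzle : ‖z‖ ≤ γz_inv (V x) := by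
    have h := le_trans (le_trans (le_max_right _ _) (le_max_left _ _)) h1
    rw [← hzinv_eq] at h
    exact (hγz_mono.le_iff_le (norm_nonneg z) hzinv_nn).mp h
  have hfzle : fz ‖z‖ ≤ fz (γz_inv (V x)) := hfz_mono (norm_nonneg z) hzinv_nn hzle
  have hfznn : 0 ≤ fz (γz_inv (V x)) := hfz0 _ hzinv_nn
  have hfxnn : 0 ≤ fx ‖x‖ := hfx0 _ (norm_nonneg x)
  -- αc monotone step
  have hcpos : (0:ℝ) < c := hv.trans hvc
  have hfrac : (c - v) / c * V x ≤ V x - v := by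
    rw [div_mul_eq_mul_div, div_le_iff₀ hcpos]
    nlinarith
  have hmem1 : (c - v) / c * V x ∈ Set.Ioi (-v) := by
    have : 0 < (c - v) / c * V x := mul_pos (div_pos (by linarith) hcpos) hVpos
    exact Set.mem_Ioi.mpr (by linarith)
  have hmem2 : V x - v ∈ Set.Ioi (-v) := Set.mem_Ioi.mpr (by linarith)
  have hαle : αc ((c - v) / c * V x) ≤ αc (V x - v) :=
    hαc.monotoneOn hmem1 hmem2 hfrac
  have hα3 : θ * V x + 1 / gbar * fz (γz_inv (V x)) + (1 + δbar / gbar) * γw_inv (V x)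
      + 1 / gbar * fx ‖x‖ ≤ αc (V x - v) := le_trans h3 hαle
  -- rewrite h5
  have h5' : ⟪q, u⟫ ≤ ‖q‖ * (-αc (V x - v)) - ‖q‖ * (δbar / gbar * ‖u‖) := by
    rw [real_inner_smul_left] at h5
    have := mul_le_mul_of_nonneg_left h5 hqpos.le
    rw [mul_add, ← mul_assoc, mul_inv_cancel₀ hqpos.ne', one_mul] at this
    linarith
  -- expand the inner product
  have hexp : ⟪p, F + (g + δ) (u + w)⟫
      = ⟪p, F⟫ + ⟪q, u⟫ + ⟪q, w⟫ + ⟪p, δ u⟫ + ⟪p, δ w⟫ := by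
    have hgu : ⟪q, u⟫ = ⟪p, g u⟫ := ContinuousLinearMap.adjoint_inner_left g u p
    have hgw : ⟪q, w⟫ = ⟪p, g w⟫ := ContinuousLinearMap.adjoint_inner_left g w p
    simp only [ContinuousLinearMap.add_apply, map_add, inner_add_right, hgu, hgw]
    ring
  -- elementary bounds
  have hbF : ⟪p, F⟫ ≤ ‖p‖ * ‖F‖ := real_inner_le_norm p F
  have hbw : ⟪q, w⟫ ≤ ‖q‖ * ‖w‖ := real_inner_le_norm q w
  have hδu : ⟪p, δ u⟫ ≤ ‖p‖ * (δbar * ‖u‖) := by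
    calc ⟪p, δ u⟫ ≤ ‖p‖ * ‖δ u‖ := real_inner_le_norm _ _
    _ ≤ ‖p‖ * (δbar * ‖u‖) := by
        have := (δ.le_opNorm u).trans (mul_le_mul_of_nonneg_right hδnorm (norm_nonneg u))
        exact mul_le_mul_of_nonneg_left this (norm_nonneg p)
  have hδw : ⟪p, δ w⟫ ≤ ‖p‖ * (δbar * ‖w‖) := by
    calc ⟪p, δ w⟫ ≤ ‖p‖ * ‖δ w‖ := real_inner_le_norm _ _
    _ ≤ ‖p‖ * (δbar * ‖w‖) := by
        have := (δ.le_opNorm w).trans (mul_le_mul_of_nonneg_right hδnorm (norm_nonneg w))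
        exact mul_le_mul_of_nonneg_left this (norm_nonneg p)
  -- multiplied monotone bounds
  have hunn : (0:ℝ) ≤ ‖u‖ := norm_nonneg u
  have hA : ‖p‖ * ‖F‖ ≤ ‖p‖ * (fz (γz_inv (V x)) + fx ‖x‖) :=
    mul_le_mul_of_nonneg_left (h4.trans (by linarith)) (norm_nonneg p)
  have hB : ‖q‖ * ‖w‖ ≤ ‖q‖ * γw_inv (V x) :=
    mul_le_mul_of_nonneg_left hwle hqpos.le
  have hC : ‖p‖ * (δbar * ‖w‖) ≤ ‖p‖ * (δbar * γw_inv (V x)) :=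
    mul_le_mul_of_nonneg_left (mul_le_mul_of_nonneg_left hwle hδ0) (norm_nonneg p)
  have hD : ‖q‖ * (θ * V x + 1 / gbar * fz (γz_inv (V x))
        + (1 + δbar / gbar) * γw_inv (V x) + 1 / gbar * fx ‖x‖) ≤ ‖q‖ * αc (V x - v) :=
    mul_le_mul_of_nonneg_left hα3 hqpos.le
  -- comparisons ‖q‖ vs gbar‖p‖ times nonneg quantities
  have hwinv_nn' : (0:ℝ) ≤ γw_inv (V x) := hwinv_nn
  have hE1 : gbar * ‖p‖ * (1 / gbar * fz (γz_inv (V x))) ≤ ‖q‖ * (1 / gbar * fz (γz_inv (V x))) :=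
    mul_le_mul_of_nonneg_right hqge (by positivity)
  have hE2 : gbar * ‖p‖ * (1 / gbar * fx ‖x‖) ≤ ‖q‖ * (1 / gbar * fx ‖x‖) :=
    mul_le_mul_of_nonneg_right hqge (by positivity)
  have hE3 : gbar * ‖p‖ * (δbar / gbar * γw_inv (V x)) ≤ ‖q‖ * (δbar / gbar * γw_inv (V x)) :=
    mul_le_mul_of_nonneg_right hqge (by positivity)
  have hE4 : gbar * ‖p‖ * (δbar / gbar * ‖u‖) ≤ ‖q‖ * (δbar / gbar * ‖u‖) :=
    mul_le_mul_of_nonneg_right hqge (by positivity)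
  have hE5 : gbar * η * (θ * V x) ≤ gbar * ‖p‖ * (θ * V x) :=
    mul_le_mul_of_nonneg_right (mul_le_mul_of_nonneg_left hpη hg.le) (by positivity)
  have hE6 : gbar * ‖p‖ * (θ * V x) ≤ ‖q‖ * (θ * V x) :=
    mul_le_mul_of_nonneg_right hqge (by positivity)
  -- simplify the gbar-cancelled forms
  have hg' : gbar ≠ 0 := hg.ne'
  have hc1 : gbar * ‖p‖ * (1 / gbar * fz (γz_inv (V x))) = ‖p‖ * fz (γz_inv (V x)) := by
    field_simp
  have hc2 : gbar * ‖p‖ * (1 / gbar * fx ‖x‖) = ‖p‖ * fx ‖x‖ := by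
    field_simp
  have hc3 : gbar * ‖p‖ * (δbar / gbar * γw_inv (V x)) = ‖p‖ * (δbar * γw_inv (V x)) := by
    field_simp
  have hc4 : gbar * ‖p‖ * (δbar / gbar * ‖u‖) = ‖p‖ * (δbar * ‖u‖) := by
    field_simp
  rw [hexp]
  rw [hc1] at hE1; rw [hc2] at hE2; rw [hc3] at hE3; rw [hc4] at hE4
  have hDexp : ‖q‖ * (θ * V x) + ‖q‖ * (1 / gbar * fz (γz_inv (V x)))
      + ‖q‖ * ((1 + δbar / gbar) * γw_inv (V x)) + ‖q‖ * (1 / gbar * fx ‖x‖)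
      ≤ ‖q‖ * αc (V x - v) := by linarith [hD, (by ring : ‖q‖ * (θ * V x + 1 / gbar * fz (γz_inv (V x)) + (1 + δbar / gbar) * γw_inv (V x) + 1 / gbar * fx ‖x‖) = ‖q‖ * (θ * V x) + ‖q‖ * (1 / gbar * fz (γz_inv (V x))) + ‖q‖ * ((1 + δbar / gbar) * γw_inv (V x)) + ‖q‖ * (1 / gbar * fx ‖x‖))]
  have hsplit : ‖q‖ * ((1 + δbar / gbar) * γw_inv (V x))
      = ‖q‖ * γw_inv (V x) + ‖q‖ * (δbar / gbar * γw_inv (V x)) := by ring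
  linarith [h5', hbF, hbw, hδu, hδw, hA, hB, hC, hDexp, hE1, hE2, hE3, hE4, hE5, hE6, hsplit]
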